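/- Let ∗ ∈ {+, −, ×, ÷}, and let f, f′, g, g′ be AEs with f ≅ f′, g ≅ g′, 𝒱(f) ∩ 𝒱(g) = ∅, and 𝒱(f′) ∩ 𝒱(g′) = ∅. Then f ∗ g ≅ f′ ∗ g′. Consequently, the operation [f] ∗ [g] = [f′ ∗ g′] on isomorphism classes (where f′ ≅ f and g′ ≅ g are chosen with 𝒱(f′) ∩ 𝒱(g′) = ∅) is well-defined, and whenever f, g ∈ 𝒜 satisfy 𝒱(f) ∩ 𝒱(g) = ∅, one has [f ∗ g] = [f] ∗ [g]. -/

import Mathlib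

/- Common framework: `K = ℝ(x₁,x₂,…)` is the field of rational functions over `ℝ` in
countably many variables (the fraction field of `MvPolynomial ℕ ℝ`), arithmetic
expressions, the permutation action, isomorphism, types, the `EndsWith` classification,
multilinear forms and monicity, isomorphism classes and their counting. -/

open MvPolynomial

noncomputable section

abbrev P : Type := MvPolynomial ℕ ℝ
abbrev K : Type := FractionRing P

def toK : P →+* K := algebraMap P K

/-- The variable `xᵢ`, as an element of `K`. -/
def Xv (i : ℕ) : K := toK (X i)

/-- `Vars f` : the set of variables on which `f` depends, i.e. the variables occurring in a
representation of `f` as a quotient of two coprime polynomials. -/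
def Vars (f : K) : Set ℕ :=
  {i | ∃ p q : P, q ≠ 0 ∧ IsRelPrime p q ∧ f = toK p / toK q ∧ (i ∈ p.vars ∨ i ∈ q.vars)}

/-- `𝒜` : the smallest subset of `K` containing every variable and closed under the four
binary operations applied to expressions with disjoint variable sets. -/
inductive IsAE : K → Prop
  | var (i : ℕ) : IsAE (Xv i)
  | add {g h : K} : IsAE g → IsAE h → Disjoint (Vars g) (Vars h) → IsAE (g + h)
  | sub {g h : K} : IsAE g → IsAE h → Disjoint (Vars g) (Vars h) → IsAE (g - h)
  | mul {g h : K} : IsAE g → IsAE h → Disjoint (Vars g) (Vars h) → IsAE (g * h)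
  | div {g h : K} : IsAE g → IsAE h → Disjoint (Vars g) (Vars h) → IsAE (g / h)

/-- The action `σ·f` of a permutation of the variables on `K`, substituting `σ(xᵢ)` for `xᵢ`. -/
def permAct (σ : Equiv.Perm ℕ) : K ≃+* K :=
  IsFractionRing.ringEquivOfRingEquiv (renameEquiv ℝ σ).toRingEquiv

/-- `f ≅ g` : `f` and `g` are isomorphic, i.e. differ by a permutation of the variables. -/
def Iso (f g : K) : Prop := ∃ σ : Equiv.Perm ℕ, permAct σ f = g

/-- First type: `-f ∉ 𝒜`. -/
def FirstType (f : K) : Prop := IsAE f ∧ ¬ IsAE (-f)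

/-- Second type: `-f ∈ 𝒜` but `f ≇ -f`. -/
def SecondType (f : K) : Prop := IsAE f ∧ IsAE (-f) ∧ ¬ Iso f (-f)

/-- Third type: `-f ∈ 𝒜` and `f ≅ -f`. -/
def ThirdType (f : K) : Prop := IsAE f ∧ IsAE (-f) ∧ Iso f (-f)

/-- The four binary operators. -/
inductive Op : Type
  | add | sub | mul | div
deriving DecidableEq

/-- `EndsWith f o` : the arithmetic expression `f` ends with the operator `o`. -/
inductive EndsWith : K → Op → Prop
  | var (i : ℕ) : EndsWith (Xv i) Op.mul
  | add_base {i j : ℕ} (hij : i ≠ j) : EndsWith (Xv i + Xv j) Op.add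
  | sub_base {i j : ℕ} (hij : i ≠ j) : EndsWith (Xv i - Xv j) Op.sub
  | mul_base {i j : ℕ} (hij : i ≠ j) : EndsWith (Xv i * Xv j) Op.mul
  | div_base {i j : ℕ} (hij : i ≠ j) : EndsWith (Xv i / Xv j) Op.div
  | add_rec {g h : K} {o₁ o₂ : Op} : IsAE g → IsAE h → Disjoint (Vars g) (Vars h) →
      3 ≤ (Vars (g + h)).ncard → o₁ ≠ Op.sub → o₂ ≠ Op.sub →
      EndsWith g o₁ → EndsWith h o₂ → EndsWith (g + h) Op.add
  | mul_rec {g h : K} {o₁ o₂ : Op} : IsAE g → IsAE h → Disjoint (Vars g) (Vars h) →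
      3 ≤ (Vars (g * h)).ncard → o₁ ≠ Op.div → o₂ ≠ Op.div →
      EndsWith g o₁ → EndsWith h o₂ → EndsWith (g * h) Op.mul
  | div_rec {g h : K} {o₁ o₂ : Op} : IsAE g → IsAE h → Disjoint (Vars g) (Vars h) →
      3 ≤ (Vars (g / h)).ncard → o₁ ≠ Op.div → o₂ ≠ Op.div →
      EndsWith g o₁ → EndsWith h o₂ → EndsWith (g / h) Op.div
  | sub_rec {g h : K} {o₁ o₂ : Op} : IsAE g → IsAE h → Disjoint (Vars g) (Vars h) →
      3 ≤ (Vars (g - h)).ncard → o₁ ≠ Op.sub → o₂ ≠ Op.sub → FirstType h →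
      EndsWith g o₁ → EndsWith h o₂ → EndsWith (g - h) Op.sub

/-- `f` ends with one of the operators in `s`. -/
def EndsIn (f : K) (s : Set Op) : Prop := ∃ o ∈ s, EndsWith f o

/-- The binary operation on `K` corresponding to an operator. -/
def applyOp (o : Op) (a b : K) : K :=
  match o with
  | Op.add => a + b
  | Op.sub => a - b
  | Op.mul => a * b
  | Op.div => a / b

/-- The variable index set `{1, …, n}` (for the variables `x₁, …, xₙ`). -/
def varsUpTo (n : ℕ) : Set ℕ := {i | 1 ≤ i ∧ i ≤ n}

/-- `𝒜ₙ` : arithmetic expressions whose variable set is exactly `{x₁, …, xₙ}`. -/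
def AEn (n : ℕ) : Set K := {f | IsAE f ∧ Vars f = varsUpTo n}

/-- A multilinear polynomial: degree at most `1` in each variable. -/
def Multilinear (p : P) : Prop := ∀ i : ℕ, p.degreeOf i ≤ 1

/-- The key of a (multilinear) monomial: the sorted list of variables occurring in it;
keys are compared in the lexicographic order on lists. -/
def monKey (m : ℕ →₀ ℕ) : List ℕ := m.support.sort (· ≤ ·)

/-- A (multilinear) polynomial is monic if the coefficient of its lexicographically
leading (i.e. first) monomial is positive. -/
def MonicML (p : P) : Prop :=
  ∃ m ∈ p.support, 0 < p.coeff m ∧ ∀ m' ∈ p.support, monKey m ≤ monKey m'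

/-- `MLForm f F₁ F₂` : `F₁ / F₂` is the multilinear form of `f`: `F₁, F₂` are coprime
multilinear polynomials, `F₂` is monic, and `f = F₁ / F₂`. -/
def MLForm (f : K) (F₁ F₂ : P) : Prop :=
  Multilinear F₁ ∧ Multilinear F₂ ∧ IsRelPrime F₁ F₂ ∧ F₂ ≠ 0 ∧ MonicML F₂ ∧
    f = toK F₁ / toK F₂

/-- A monic arithmetic expression: the numerator of its multilinear form is monic as well. -/
def MonicAE (f : K) : Prop := ∃ F₁ F₂ : P, MLForm f F₁ F₂ ∧ MonicML F₁

/-- The isomorphism class of `f`. -/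
def classOf (f : K) : Set K := {g | Iso f g}

/-- `S̄` : the set of isomorphism classes of elements of `S`. -/
def classes (S : Set K) : Set (Set K) := classOf '' S

/-- `|S̄|` : the number of isomorphism classes of elements of `S`. -/
def countClasses (S : Set K) : ℕ := (classes S).ncard

/-- The number of isomorphism classes of elements of `S` depending on exactly `k` variables. -/
def gradeCount (S : Set K) (k : ℕ) : ℕ := countClasses {f ∈ S | (Vars f).ncard = k}

/-- `ω_n` for a graded family having `N k` elements in grade `k` : the sum over all
partitions `(k₁^{m₁},…,k_s^{m_s})` of `n` of `∏ⱼ C(N kⱼ + mⱼ - 1, mⱼ)`. -/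
def omega (N : ℕ → ℕ) (n : ℕ) : ℕ :=
  ∑ p : n.Partition,
    ∏ k ∈ p.parts.toFinset, Nat.choose (N k + p.parts.count k - 1) (p.parts.count k)

/-- `ω_n′` : the same sum restricted to non-trivial partitions, i.e. `ω_n - N n`. -/
def omega' (N : ℕ → ℕ) (n : ℕ) : ℕ := omega N n - N n

/-- `𝒜(s)` : arithmetic expressions ending with one of the operators in `s`. -/
def Aset (s : Set Op) : Set K := {f | IsAE f ∧ EndsIn f s}

/-- `ℱ(s)` : first-type arithmetic expressions ending with one of the operators in `s`. -/
def Fset (s : Set Op) : Set K := {f | FirstType f ∧ EndsIn f s}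

/-- `ℬ(s)` : second-type arithmetic expressions ending with one of the operators in `s`. -/
def Bset (s : Set Op) : Set K := {f | SecondType f ∧ EndsIn f s}

/-- `𝒞(s)` : third-type arithmetic expressions ending with one of the operators in `s`. -/
def Cset (s : Set Op) : Set K := {f | ThirdType f ∧ EndsIn f s}

/-- `ℳℬ(s)` : monic second-type arithmetic expressions ending with an operator in `s`. -/
def MBset (s : Set Op) : Set K := {f | SecondType f ∧ MonicAE f ∧ EndsIn f s}


/-! ### Auxiliary lemmas -/

lemma toK_injective : Function.Injective toK :=
  IsFractionRing.injective P K

lemma permAct_toK (σ : Equiv.Perm ℕ) (p : P) :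
    permAct σ (toK p) = toK (rename σ p) := by
  simpa [permAct, toK] using
    IsFractionRing.ringEquivOfRingEquiv_algebraMap (renameEquiv ℝ σ).toRingEquiv p

lemma permAct_inv_permAct (σ : Equiv.Perm ℕ) (x : K) :
    permAct σ⁻¹ (permAct σ x) = x := by
  have key : ∀ p : P, permAct σ⁻¹ (permAct σ (toK p)) = toK p := by
    intro p
    rw [permAct_toK, permAct_toK, rename_rename]
    have hc : (⇑σ⁻¹ ∘ ⇑σ : ℕ → ℕ) = id := by funext i; simp
    rw [hc, rename_id, AlgHom.id_apply]
  have h : ((permAct σ⁻¹ : K ≃+* K) : K →+* K).comp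
      ((permAct σ : K ≃+* K) : K →+* K) = RingHom.id K := by
    apply IsLocalization.ringHom_ext (nonZeroDivisors P)
    refine RingHom.ext fun p => ?_
    exact key p
  exact RingHom.congr_fun h x

/-- Every element of `K` has a reduced-fraction representation. -/
lemma exists_rep (f : K) :
    ∃ p q : P, q ≠ 0 ∧ IsRelPrime p q ∧ f = toK p / toK q := by
  refine ⟨IsFractionRing.num P f, (IsFractionRing.den P f : P),
    mem_nonZeroDivisors_iff_ne_zero.mp (IsFractionRing.den P f).2,
    IsFractionRing.num_den_reduced P f,
    (IsFractionRing.mk'_num_den' P f).symm⟩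

lemma subset_Vars {f : K} {p q : P} (hq : q ≠ 0) (hpq : IsRelPrime p q)
    (hf : f = toK p / toK q) : (↑p.vars : Set ℕ) ∪ ↑q.vars ⊆ Vars f := by
  rintro i (hi | hi)
  · exact ⟨p, q, hq, hpq, hf, Or.inl hi⟩
  · exact ⟨p, q, hq, hpq, hf, Or.inr hi⟩

/-- Units of the polynomial ring have no variables. -/
lemma vars_of_isUnit {u : P} (hu : IsUnit u) : u.vars = ∅ := by
  obtain ⟨v, hv⟩ := isUnit_iff_exists_inv.mp hu
  have hu0 : u ≠ 0 := by rintro rfl; simp at hv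
  have hv0 : v ≠ 0 := by rintro rfl; simp at hv
  have hadd : ∀ a b : (ℕ →₀ ℕ), toLex (a + b) = toLex a + toLex b := fun _ _ => rfl
  have hD : Function.Injective (toLex : (ℕ →₀ ℕ) → Lex (ℕ →₀ ℕ)) := toLex.injective
  have hlc : AddMonoidAlgebra.leadingCoeff (toLex : (ℕ →₀ ℕ) → Lex (ℕ →₀ ℕ)) u *
      AddMonoidAlgebra.leadingCoeff toLex v ≠ 0 := by
    apply mul_ne_zero <;> rwa [Ne, AddMonoidAlgebra.leadingCoeff_eq_zero hD]
  have hmul := AddMonoidAlgebra.supDegree_mul hD hadd hlc hu0 hv0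
  rw [hv] at hmul
  have h1 : AddMonoidAlgebra.supDegree (toLex : (ℕ →₀ ℕ) → Lex (ℕ →₀ ℕ))
      (1 : P) = 0 := by
    simpa using MvPolynomial.supDegree_toLex_C (σ := ℕ) (1 : ℝ)
  rw [h1] at hmul
  have hb : (0 : Lex (ℕ →₀ ℕ)) = ⊥ := rfl
  have hu' : AddMonoidAlgebra.supDegree (toLex : (ℕ →₀ ℕ) → Lex (ℕ →₀ ℕ)) u = 0 := by
    have h1 : (0 : Lex (ℕ →₀ ℕ)) ≤ AddMonoidAlgebra.supDegree toLex u := hb ▸ bot_le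
    have h2 : (0 : Lex (ℕ →₀ ℕ)) ≤ AddMonoidAlgebra.supDegree toLex v := hb ▸ bot_le
    have : AddMonoidAlgebra.supDegree (toLex : (ℕ →₀ ℕ) → Lex (ℕ →₀ ℕ)) u ≤ 0 := by
      calc AddMonoidAlgebra.supDegree (toLex : (ℕ →₀ ℕ) → Lex (ℕ →₀ ℕ)) u
          = AddMonoidAlgebra.supDegree (toLex : (ℕ →₀ ℕ) → Lex (ℕ →₀ ℕ)) u + 0 :=
            (add_zero _).symm
        _ ≤ AddMonoidAlgebra.supDegree (toLex : (ℕ →₀ ℕ) → Lex (ℕ →₀ ℕ)) u +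
              AddMonoidAlgebra.supDegree toLex v := add_le_add le_rfl h2
        _ = 0 := hmul.symm
    exact le_antisymm this h1
  -- every monomial in the support of `u` is `0`
  ext i
  simp only [Finset.notMem_empty, iff_false]
  rw [MvPolynomial.mem_vars]
  rintro ⟨d, hd, hid⟩
  have : toLex d ≤ AddMonoidAlgebra.supDegree (toLex : (ℕ →₀ ℕ) → Lex (ℕ →₀ ℕ)) u :=
    Finset.le_sup hd
  rw [hu'] at this
  have hd0 : toLex d = 0 := le_antisymm (hb ▸ this) (hb ▸ bot_le)
  have : d = 0 := hD (by simpa using hd0)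
  simp [this] at hid

/-- Reduced-fraction representations are unique up to units; hence `Vars` is bounded
by the variables of any reduced representation. -/
lemma Vars_subset {f : K} {p q : P} (hq : q ≠ 0) (hpq : IsRelPrime p q)
    (hf : f = toK p / toK q) : Vars f ⊆ (↑p.vars : Set ℕ) ∪ ↑q.vars := by
  rintro i ⟨p', q', hq', hpq', hf', hi⟩
  have hq0 : toK q ≠ 0 := fun h => hq (toK_injective (by simpa using h))
  have hq0' : toK q' ≠ 0 := fun h => hq' (toK_injective (by simpa using h))
  have h0 : toK p * toK q' = toK p' * toK q :=
    (div_eq_div_iff hq0 hq0').mp (hf.symm.trans hf')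
  have hcross : p * q' = p' * q := by
    apply toK_injective
    rw [map_mul, map_mul]
    exact h0
  have hdvd1 : q' ∣ q := by
    apply IsRelPrime.dvd_of_dvd_mul_right hpq'.symm
    exact ⟨p, by linear_combination -hcross⟩
  have hdvd2 : q ∣ q' := by
    apply IsRelPrime.dvd_of_dvd_mul_right hpq.symm
    exact ⟨p', by linear_combination hcross⟩
  obtain ⟨u, hu⟩ := associated_of_dvd_dvd hdvd2 hdvd1
  have hp' : p' = p * (u : P) := by
    have : q * (p * (u : P)) = q * p' := by
      rw [← hu] at hcross; linear_combination hcross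
    exact (mul_left_cancel₀ hq this).symm
  have hvu : (u : P).vars = ∅ := vars_of_isUnit u.isUnit
  have hq'v : q'.vars ⊆ q.vars := by
    rw [← hu]
    refine (vars_mul _ _).trans ?_
    simp [hvu]
  have hp'v : p'.vars ⊆ p.vars := by
    rw [hp']
    refine (vars_mul _ _).trans ?_
    simp [hvu]
  rcases hi with hi | hi
  · exact Or.inl (hp'v hi)
  · exact Or.inr (hq'v hi)

lemma Vars_eq {f : K} {p q : P} (hq : q ≠ 0) (hpq : IsRelPrime p q)
    (hf : f = toK p / toK q) : Vars f = (↑p.vars : Set ℕ) ∪ ↑q.vars :=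
  Set.Subset.antisymm (Vars_subset hq hpq hf) (subset_Vars hq hpq hf)

lemma Vars_finite (f : K) : (Vars f).Finite := by
  obtain ⟨p, q, hq, hpq, hf⟩ := exists_rep f
  rw [Vars_eq hq hpq hf]
  exact (p.vars.finite_toSet).union (q.vars.finite_toSet)

lemma rename_perm_ne_zero (σ : Equiv.Perm ℕ) {q : P} (hq : q ≠ 0) :
    rename ⇑σ q ≠ 0 := fun h =>
  hq (rename_injective _ σ.injective (by simpa using h))

lemma rename_isRelPrime (σ : Equiv.Perm ℕ) {p q : P} (h : IsRelPrime p q) :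
    IsRelPrime (rename ⇑σ p) (rename ⇑σ q) := by
  intro d hd1 hd2
  have e : ∀ r : P, rename ⇑σ (rename ⇑σ⁻¹ r) = r := fun r => by
    rw [rename_rename]
    have : (⇑σ ∘ ⇑σ⁻¹ : ℕ → ℕ) = id := by funext i; simp
    rw [this, rename_id, AlgHom.id_apply]
  have h1 : rename ⇑σ⁻¹ d ∣ p := by
    have := map_dvd (rename (⇑σ⁻¹) : P →ₐ[ℝ] P) hd1
    rw [rename_rename] at this
    have hc : (⇑σ⁻¹ ∘ ⇑σ : ℕ → ℕ) = id := by funext i; simp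
    rw [hc, rename_id] at this
    exact this
  have h2 : rename ⇑σ⁻¹ d ∣ q := by
    have := map_dvd (rename (⇑σ⁻¹) : P →ₐ[ℝ] P) hd2
    rw [rename_rename] at this
    have hc : (⇑σ⁻¹ ∘ ⇑σ : ℕ → ℕ) = id := by funext i; simp
    rw [hc, rename_id] at this
    exact this
  have := h h1 h2
  have := this.map (rename (⇑σ) : P →ₐ[ℝ] P)
  rwa [e d] at this

lemma vars_rename_perm (σ : Equiv.Perm ℕ) (p : P) :
    (rename ⇑σ p).vars = p.vars.image σ := by
  apply Finset.Subset.antisymm (vars_rename _ _)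
  intro j hj
  rw [Finset.mem_image] at hj
  obtain ⟨i, hi, rfl⟩ := hj
  have e : rename ⇑σ⁻¹ (rename ⇑σ p) = p := by
    rw [rename_rename]
    have : (⇑σ⁻¹ ∘ ⇑σ : ℕ → ℕ) = id := by funext i; simp
    rw [this, rename_id, AlgHom.id_apply]
  have : i ∈ (rename ⇑σ⁻¹ (rename ⇑σ p)).vars := by rw [e]; exact hi
  have := vars_rename (⇑σ⁻¹) (rename ⇑σ p) this
  rw [Finset.mem_image] at this
  obtain ⟨j, hj, hji⟩ := this
  have : j = σ i := by
    have := congrArg σ hji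
    simpa using this
  exact this ▸ hj

lemma permAct_rep (σ : Equiv.Perm ℕ) {f : K} {p q : P} (hf : f = toK p / toK q) :
    permAct σ f = toK (rename ⇑σ p) / toK (rename ⇑σ q) := by
  rw [hf, map_div₀, permAct_toK, permAct_toK]

lemma Vars_permAct (σ : Equiv.Perm ℕ) (f : K) :
    Vars (permAct σ f) = σ '' Vars f := by
  have key : ∀ (τ : Equiv.Perm ℕ) (g : K), τ '' Vars g ⊆ Vars (permAct τ g) := by
    intro τ g
    rintro _ ⟨i, hi, rfl⟩
    obtain ⟨p, q, hq, hpq, hg, hmem⟩ := hi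
    refine ⟨rename ⇑τ p, rename ⇑τ q, rename_perm_ne_zero τ hq,
      rename_isRelPrime τ hpq, permAct_rep τ hg, ?_⟩
    rcases hmem with h | h
    · exact Or.inl (by rw [vars_rename_perm]; exact Finset.mem_image_of_mem _ h)
    · exact Or.inr (by rw [vars_rename_perm]; exact Finset.mem_image_of_mem _ h)
  apply Set.Subset.antisymm
  · intro i hi
    have := key σ⁻¹ (permAct σ f)
    rw [permAct_inv_permAct] at this
    have hmem : σ⁻¹ i ∈ Vars f := this ⟨i, hi, rfl⟩
    exact ⟨σ⁻¹ i, hmem, by simp⟩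
  · exact key σ f

lemma permAct_Xv (σ : Equiv.Perm ℕ) (i : ℕ) :
    permAct σ (Xv i) = Xv (σ i) := by
  rw [Xv, permAct_toK, rename_X]; rfl

lemma IsAE_permAct (σ : Equiv.Perm ℕ) {f : K} (hf : IsAE f) :
    IsAE (permAct σ f) := by
  induction hf with
  | var i => rw [permAct_Xv]; exact IsAE.var _
  | add hg hh hd ihg ihh =>
      rw [map_add]
      exact IsAE.add ihg ihh
        (by rw [Vars_permAct, Vars_permAct]
            exact (Set.disjoint_image_iff σ.injective).mpr hd)
  | sub hg hh hd ihg ihh =>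
      rw [map_sub]
      exact IsAE.sub ihg ihh
        (by rw [Vars_permAct, Vars_permAct]
            exact (Set.disjoint_image_iff σ.injective).mpr hd)
  | mul hg hh hd ihg ihh =>
      rw [map_mul]
      exact IsAE.mul ihg ihh
        (by rw [Vars_permAct, Vars_permAct]
            exact (Set.disjoint_image_iff σ.injective).mpr hd)
  | div hg hh hd ihg ihh =>
      rw [map_div₀]
      exact IsAE.div ihg ihh
        (by rw [Vars_permAct, Vars_permAct]
            exact (Set.disjoint_image_iff σ.injective).mpr hd)

/-- The action of a permutation on `f` depends only on its values on `Vars f`. -/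
lemma permAct_congr {σ τ : Equiv.Perm ℕ} {f : K}
    (h : ∀ i ∈ Vars f, σ i = τ i) : permAct σ f = permAct τ f := by
  obtain ⟨p, q, hq, hpq, hf⟩ := exists_rep f
  have hsub := subset_Vars hq hpq hf
  have congrRename : ∀ r : P, ↑r.vars ⊆ Vars f → rename ⇑σ r = rename ⇑τ r := by
    intro r hr
    apply hom_congr_vars (f₁ := ((rename (⇑σ) : P →ₐ[ℝ] P) : P →+* P))
        (f₂ := ((rename (⇑τ) : P →ₐ[ℝ] P) : P →+* P))
    · ext1 c
      simp
    · intro i hi _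
      simp only [AlgHom.toRingHom_eq_coe, RingHom.coe_coe, rename_X]
      rw [h i (hr hi)]
    · rfl
  rw [permAct_rep σ hf, permAct_rep τ hf,
    congrRename p (fun i hi => hsub (Or.inl hi)),
    congrRename q (fun i hi => hsub (Or.inr hi))]

/-- Any injection defined on a finite set of naturals extends to a permutation. -/
lemma exists_perm_extend (s : Finset ℕ) (φ : ℕ → ℕ) :
    Set.InjOn φ ↑s → ∃ π : Equiv.Perm ℕ, ∀ i ∈ s, π i = φ i := by
  classical
  induction s using Finset.induction_on with
  | empty => exact fun _ => ⟨1, by simp⟩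
  | @insert a s ha ih =>
      intro hinj
      obtain ⟨π, hπ⟩ := ih (hinj.mono (Finset.coe_subset.mpr (Finset.subset_insert a s)))
      set b := π.symm (φ a) with hb
      have hbs : b ∉ s := by
        intro hbs
        have : π b = φ b := hπ b hbs
        have hπb : π b = φ a := by simp [hb]
        have : φ b = φ a := by rw [← this, hπb]
        have hba : b = a := hinj (by simp [hbs]) (by simp) this
        exact ha (hba ▸ hbs)
      refine ⟨(Equiv.swap a b).trans π, ?_⟩
      intro i hi
      rcases Finset.mem_insert.mp hi with rfl | his
      · simp [Equiv.trans_apply, Equiv.swap_apply_left, hb]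
      · have hia : i ≠ a := fun h => ha (h ▸ his)
        have hib : i ≠ b := fun h => hbs (h ▸ his)
        simp [Equiv.trans_apply, Equiv.swap_apply_of_ne_of_ne hia hib, hπ i his]


/-- If `f ≅ f′`, `g ≅ g′`, `𝒱(f) ∩ 𝒱(g) = ∅` and `𝒱(f′) ∩ 𝒱(g′) = ∅`,
then `f ∗ g ≅ f′ ∗ g′`; consequently the operation `[f] ∗ [g] := [f′ ∗ g′]` on
isomorphism classes (choosing representatives with disjoint variable sets, which always
exist) is well-defined, and `[f ∗ g] = [f] ∗ [g]` whenever `𝒱(f) ∩ 𝒱(g) = ∅`. -/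
theorem class_operation_well_defined (o : Op) :
    (∀ f f' g g' : K, IsAE f → IsAE f' → IsAE g → IsAE g' →
      Iso f f' → Iso g g' →
      Disjoint (Vars f) (Vars g) → Disjoint (Vars f') (Vars g') →
      Iso (applyOp o f g) (applyOp o f' g')) ∧
    (∀ f g : K, IsAE f → IsAE g →
      ∃ g' : K, IsAE g' ∧ Iso g g' ∧ Disjoint (Vars f) (Vars g')) := by
  constructor
  · rintro f f' g g' hf hf' hg hg' ⟨σ, hσ⟩ ⟨τ, hτ⟩ hdis hdis'
    classical
    obtain ⟨pf, qf, hqf, hpqf, hrf⟩ := exists_rep f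
    obtain ⟨pg, qg, hqg, hpqg, hrg⟩ := exists_rep g
    set Af : Finset ℕ := pf.vars ∪ qf.vars with hAf
    set Ag : Finset ℕ := pg.vars ∪ qg.vars with hAg
    have hVf : Vars f = ↑Af := by
      rw [Vars_eq hqf hpqf hrf, hAf, Finset.coe_union]
    have hVg : Vars g = ↑Ag := by
      rw [Vars_eq hqg hpqg hrg, hAg, Finset.coe_union]
    set φ : ℕ → ℕ := fun i => if i ∈ Af then σ i else τ i with hφ
    have hφf : ∀ i ∈ Vars f, φ i = σ i := by
      intro i hi
      rw [hVf] at hi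
      simp [hφ, Finset.mem_coe.mp hi]
    have hφg : ∀ i ∈ Vars g, φ i = τ i := by
      intro i hi
      have hnf : i ∉ Af := by
        intro h
        exact Set.disjoint_left.mp hdis (hVf ▸ (Finset.mem_coe.mpr h)) hi
      simp [hφ, hnf]
    have hVf' : σ '' Vars f = Vars f' := by rw [← Vars_permAct, hσ]
    have hVg' : τ '' Vars g = Vars g' := by rw [← Vars_permAct, hτ]
    have hinj : Set.InjOn φ ↑(Af ∪ Ag) := by
      intro i hi j hj hij
      simp only [Finset.coe_union, Set.mem_union, Finset.mem_coe] at hi hj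
      by_cases hiA : i ∈ Af <;> by_cases hjA : j ∈ Af
      · have : σ i = σ j := by simpa [hφ, hiA, hjA] using hij
        exact σ.injective this
      · exfalso
        have hjB : j ∈ Ag := hj.resolve_left hjA
        have h1 : φ i ∈ Vars f' := by
          rw [← hVf']
          exact ⟨i, hVf ▸ Finset.mem_coe.mpr hiA, by simp [hφ, hiA]⟩
        have h2 : φ j ∈ Vars g' := by
          rw [← hVg']
          exact ⟨j, hVg ▸ Finset.mem_coe.mpr hjB, by simp [hφ, hjA]⟩
        exact Set.disjoint_left.mp hdis' h1 (hij ▸ h2)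
      · exfalso
        have hiB : i ∈ Ag := hi.resolve_left hiA
        have h1 : φ j ∈ Vars f' := by
          rw [← hVf']
          exact ⟨j, hVf ▸ Finset.mem_coe.mpr hjA, by simp [hφ, hjA]⟩
        have h2 : φ i ∈ Vars g' := by
          rw [← hVg']
          exact ⟨i, hVg ▸ Finset.mem_coe.mpr hiB, by simp [hφ, hiA]⟩
        exact Set.disjoint_left.mp hdis' h1 (hij ▸ h2)
      · have hiB : i ∈ Ag := hi.resolve_left hiA
        have hjB : j ∈ Ag := hj.resolve_left hjA
        have : τ i = τ j := by simpa [hφ, hiA, hjA] using hij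
        exact τ.injective this
    obtain ⟨π, hπ⟩ := exists_perm_extend (Af ∪ Ag) φ hinj
    have hπf : permAct π f = f' := by
      rw [← hσ]
      apply permAct_congr
      intro i hi
      have hiA : i ∈ Af := Finset.mem_coe.mp (hVf ▸ hi)
      rw [hπ i (Finset.mem_union_left _ hiA)]
      exact hφf i hi
    have hπg : permAct π g = g' := by
      rw [← hτ]
      apply permAct_congr
      intro i hi
      have hiB : i ∈ Ag := Finset.mem_coe.mp (hVg ▸ hi)
      rw [hπ i (Finset.mem_union_right _ hiB)]
      exact hφg i hi
    exact ⟨π, by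
      cases o <;>
        simp only [applyOp, map_add, map_sub, map_mul, map_div₀, hπf, hπg]⟩
  · intro f g hf hg
    classical
    obtain ⟨pf, qf, hqf, hpqf, hrf⟩ := exists_rep f
    obtain ⟨pg, qg, hqg, hpqg, hrg⟩ := exists_rep g
    set s : Finset ℕ := pf.vars ∪ qf.vars ∪ (pg.vars ∪ qg.vars) with hs
    set N : ℕ := s.sup id + 1 with hN
    have hinj : Set.InjOn (· + N) ↑(pg.vars ∪ qg.vars) := by
      intro i _ j _ h
      simpa using h
    obtain ⟨π, hπ⟩ := exists_perm_extend (pg.vars ∪ qg.vars) _ hinj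
    refine ⟨permAct π g, IsAE_permAct π hg, ⟨π, rfl⟩, ?_⟩
    rw [Vars_permAct, Set.disjoint_left]
    rintro a haf ⟨i, hig, rfl⟩
    have hig' : i ∈ pg.vars ∪ qg.vars := by
      have := Vars_subset hqg hpqg hrg hig
      rcases this with h | h
      · exact Finset.mem_union_left _ (Finset.mem_coe.mp h)
      · exact Finset.mem_union_right _ (Finset.mem_coe.mp h)
    have hπi : π i = i + N := hπ i hig'
    have haf' : π i ∈ pf.vars ∪ qf.vars := by
      have := Vars_subset hqf hpqf hrf haf
      rcases this with h | h
      · exact Finset.mem_union_left _ (Finset.mem_coe.mp h)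
      · exact Finset.mem_union_right _ (Finset.mem_coe.mp h)
    have h1 : π i ≤ s.sup id := Finset.le_sup (f := id) (Finset.mem_union_left _ haf')
    omega


end
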